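/- arXiv:2401.00164 — 9 statements merged into one kernel-verified Lean document; each statement's English description precedes it below -/
import Mathlib

section
/- If M is a metric space whose distance satisfies the strong triangle inequality dist x z ≤ max (dist x y) (dist y z) for all x, y, z (an ultrametric space), then the Hausdorff distance also satisfies the strong triangle inequality: for all nonempty bounded subsets A, B, C of M, hausdorffDist A C ≤ max (hausdorffDist A B) (hausdorffDist B C). -/
open Metric

/-- In an ultrametric space, the Hausdorff distance on nonempty bounded sets also satisfies
the strong triangle inequality. -/
theorem hausdorffDist_strong_triangle {M : Type*} [MetricSpace M]
    (hultra : ∀ x y z : M, dist x z ≤ max (dist x y) (dist y z))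
    (A B C : Set M) (hA : A.Nonempty) (hB : B.Nonempty) (hC : C.Nonempty)
    (hAbd : Bornology.IsBounded A) (hBbd : Bornology.IsBounded B)
    (hCbd : Bornology.IsBounded C) :
    hausdorffDist A C ≤ max (hausdorffDist A B) (hausdorffDist B C) := by
  have key : ∀ (X Y Z : Set M), Y.Nonempty → Z.Nonempty →
      EMetric.hausdorffEdist X Y ≠ ⊤ → EMetric.hausdorffEdist Y Z ≠ ⊤ →
      ∀ x ∈ X, infDist x Z ≤ max (hausdorffDist X Y) (hausdorffDist Y Z) := by
    intro X Y Z hY hZ hXY hYZ x hx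
    refine le_of_forall_pos_le_add ?_
    intro ε hε
    have h1 : infDist x Y ≤ hausdorffDist X Y := infDist_le_hausdorffDist_of_mem hx hXY
    obtain ⟨y, hy, hxy⟩ := (infDist_lt_iff hY).1
      (lt_add_of_pos_right (infDist x Y) hε : infDist x Y < infDist x Y + ε)
    have h2 : infDist y Z ≤ hausdorffDist Y Z := infDist_le_hausdorffDist_of_mem hy hYZ
    obtain ⟨z, hz, hyz⟩ := (infDist_lt_iff hZ).1
      (lt_add_of_pos_right (infDist y Z) hε : infDist y Z < infDist y Z + ε)
    calc infDist x Z ≤ dist x z := infDist_le_dist_of_mem hz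
      _ ≤ max (dist x y) (dist y z) := hultra x y z
      _ ≤ max (hausdorffDist X Y) (hausdorffDist Y Z) + ε := by
          rcases max_cases (dist x y) (dist y z) with ⟨h, _⟩ | ⟨h, _⟩ <;> rw [h]
          · have := le_max_left (hausdorffDist X Y) (hausdorffDist Y Z)
            linarith
          · have := le_max_right (hausdorffDist X Y) (hausdorffDist Y Z)
            linarith
  have hABe := hausdorffEdist_ne_top_of_nonempty_of_bounded hA hB hAbd hBbd
  have hBCe := hausdorffEdist_ne_top_of_nonempty_of_bounded hB hC hBbd hCbd
  have hultra' : ∀ x y z : M, dist x z ≤ max (dist x y) (dist y z) := hultra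
  refine hausdorffDist_le_of_infDist (le_max_of_le_left hausdorffDist_nonneg) ?_ ?_
  · exact fun x hx => key A B C hB hC hABe hBCe x hx
  · intro x hx
    have := key C B A hB hA (by rwa [EMetric.hausdorffEdist, EMetric.hausdorffEdist_comm]) (by rwa [EMetric.hausdorffEdist, EMetric.hausdorffEdist_comm]) x hx
    rwa [show hausdorffDist C B = hausdorffDist B C from hausdorffDist_comm,
      show hausdorffDist B A = hausdorffDist A B from hausdorffDist_comm, max_comm] at this
end

section
/- A multivalued stream transformer T : (ℕ → A) → Set (ℕ → B) with all values nonempty is δ-causal (for δ ∈ ℕ) if and only if it is a (1/2)^δ-contraction, i.e., for all streams f, g and every u ∈ T f there exists v ∈ T g with dist u v ≤ (1/2)^δ * dist f g. -/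
open Metric

/-- The prefix metric on streams: `dist f g = (1/2)^n` where `n` is the first index
at which `f` and `g` differ (Mathlib's `PiNat` distance). -/
noncomputable instance streamMetricSpace {A : Type*} : MetricSpace (ℕ → A) :=
  letI : TopologicalSpace A := ⊥
  haveI : DiscreteTopology A := ⟨rfl⟩
  PiNat.metricSpace

/-- A multivalued stream transformer `T` is `δ`-causal if whenever two input streams agree
on all indices `< k`, the sets of restrictions to indices `< k + δ` of their output sets agree. -/
def IsCausal {A B : Type*} (δ : ℕ) (T : (ℕ → A) → Set (ℕ → B)) : Prop :=
  ∀ (k : ℕ) (f g : ℕ → A), (∀ i < k, f i = g i) →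
    (fun (u : ℕ → B) (i : Fin (k + δ)) => u (i : ℕ)) '' T f =
      (fun (u : ℕ → B) (i : Fin (k + δ)) => u (i : ℕ)) '' T g

lemma stream_dist_eq {A : Type*} (f g : ℕ → A) :
    dist f g = @dist _ PiNat.dist f g := rfl

lemma stream_dist_le {A : Type*} {f g : ℕ → A} {n : ℕ} (h : ∀ i < n, f i = g i) :
    dist f g ≤ (1 / 2 : ℝ) ^ n := by
  rw [stream_dist_eq]
  exact PiNat.mem_cylinder_iff_dist_le.1 h

lemma stream_apply_eq_of_dist_lt {A : Type*} {f g : ℕ → A} {n : ℕ}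
    (h : dist f g < (1 / 2 : ℝ) ^ n) {i : ℕ} (hi : i ≤ n) : f i = g i := by
  rw [stream_dist_eq] at h
  exact PiNat.apply_eq_of_dist_lt h hi

/-- A multivalued stream transformer with nonempty values is δ-causal iff it is a
(1/2)^δ-contraction. -/
theorem causal_iff_contraction {A B : Type*} (δ : ℕ)
    (T : (ℕ → A) → Set (ℕ → B)) (hne : ∀ f, (T f).Nonempty) :
    IsCausal δ T ↔
      ∀ f g : ℕ → A, ∀ u ∈ T f, ∃ v ∈ T g, dist u v ≤ (1 / 2 : ℝ) ^ δ * dist f g := by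
  constructor
  · intro hc f g u hu
    rcases eq_or_ne f g with rfl | hfg
    · exact ⟨u, hu, by simp [dist_self]⟩
    · set k := PiNat.firstDiff f g with hk
      have hagree : ∀ i < k, f i = g i := fun i hi => PiNat.apply_eq_of_lt_firstDiff hi
      have heq := hc k f g hagree
      have hmem : (fun (u : ℕ → B) (i : Fin (k + δ)) => u (i : ℕ)) u ∈
          (fun (u : ℕ → B) (i : Fin (k + δ)) => u (i : ℕ)) '' T g := by
        rw [← heq]; exact ⟨u, hu, rfl⟩
      rcases hmem with ⟨v, hv, hvu⟩
      refine ⟨v, hv, ?_⟩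
      have huv : ∀ i < k + δ, u i = v i := fun i hi => (congrFun hvu ⟨i, hi⟩).symm
      have h1 : dist u v ≤ (1 / 2 : ℝ) ^ (k + δ) := stream_dist_le huv
      have h2 : dist f g = (1 / 2 : ℝ) ^ k := by
        rw [stream_dist_eq]; exact PiNat.dist_eq_of_ne hfg
      rw [h2, ← pow_add, add_comm δ k]
      exact h1
  · intro hc k f g hagree
    have key : ∀ f g : ℕ → A, (∀ i < k, f i = g i) →
        (fun (u : ℕ → B) (i : Fin (k + δ)) => u (i : ℕ)) '' T f ⊆
          (fun (u : ℕ → B) (i : Fin (k + δ)) => u (i : ℕ)) '' T g := by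
      rintro f g hagree _ ⟨u, hu, rfl⟩
      rcases hc f g u hu with ⟨v, hv, hdist⟩
      refine ⟨v, hv, ?_⟩
      have hfg : dist f g ≤ (1 / 2 : ℝ) ^ k := stream_dist_le hagree
      have hle : dist u v ≤ (1 / 2 : ℝ) ^ (k + δ) := by
        calc dist u v ≤ (1 / 2 : ℝ) ^ δ * dist f g := hdist
          _ ≤ (1 / 2 : ℝ) ^ δ * (1 / 2 : ℝ) ^ k :=
              mul_le_mul_of_nonneg_left hfg (by positivity)
          _ = (1 / 2 : ℝ) ^ (k + δ) := by rw [← pow_add, add_comm]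
      funext i
      refine (stream_apply_eq_of_dist_lt (n := (i : ℕ)) ?_ le_rfl).symm
      refine hle.trans_lt ?_
      exact pow_lt_pow_right_of_lt_one₀ (by norm_num) (by norm_num) i.2
    exact le_antisymm (key f g hagree) (key g f fun i hi => (hagree i hi).symm)
end

section
/- Let M, N be metric spaces and let T : M → Set N be l-Lipschitz with nonempty compact values. Then the strongest post transformer SP_T is l-Lipschitz on nonempty compact sets: for all nonempty compact subsets P, Q of M, hausdorffDist (⋃_{x ∈ P} T x) (⋃_{x ∈ Q} T x) ≤ l * hausdorffDist P Q. -/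
open Metric

/-- If T is l-Lipschitz with nonempty compact values then the strongest post transformer
`P ↦ ⋃ x ∈ P, T x` is l-Lipschitz on nonempty compact sets. -/
theorem strongest_post_lipschitz {M N : Type*} [MetricSpace M] [MetricSpace N]
    (T : M → Set N) (l : ℝ) (hl : 0 < l)
    (hne : ∀ x, (T x).Nonempty) (hcomp : ∀ x, IsCompact (T x))
    (hT : ∀ x y : M, hausdorffDist (T x) (T y) ≤ l * dist x y) :
    ∀ P Q : Set M, P.Nonempty → IsCompact P → Q.Nonempty → IsCompact Q →
      hausdorffDist (⋃ x ∈ P, T x) (⋃ x ∈ Q, T x) ≤ l * hausdorffDist P Q := by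
  intro P Q hPne hPc hQne hQc
  have hPQtop : EMetric.hausdorffEdist P Q ≠ ⊤ :=
    hausdorffEdist_ne_top_of_nonempty_of_bounded hPne hQne hPc.isBounded hQc.isBounded
  have hTtop : ∀ x y : M, EMetric.hausdorffEdist (T x) (T y) ≠ ⊤ := fun x y =>
    hausdorffEdist_ne_top_of_nonempty_of_bounded (hne x) (hne y)
      (hcomp x).isBounded (hcomp y).isBounded
  have key : ∀ (A B : Set M), A.Nonempty → IsCompact A → B.Nonempty → IsCompact B →
      ∀ y ∈ ⋃ x ∈ A, T x, infDist y (⋃ x ∈ B, T x) ≤ l * hausdorffDist A B := by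
    intro A B hAne hAc hBne hBc y hy
    rcases Set.mem_iUnion₂.1 hy with ⟨x, hxA, hyx⟩
    rcases hBc.exists_infDist_eq_dist hBne x with ⟨q, hqB, hq⟩
    have h1 : infDist y (⋃ x ∈ B, T x) ≤ infDist y (T q) :=
      infDist_le_infDist_of_subset (Set.subset_biUnion_of_mem hqB) (hne q)
    have h2 : infDist y (T q) ≤ hausdorffDist (T x) (T q) :=
      infDist_le_hausdorffDist_of_mem hyx (hTtop x q)
    have h3 : hausdorffDist (T x) (T q) ≤ l * dist x q := hT x q
    have h4 : dist x q ≤ hausdorffDist A B := by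
      rw [← hq]
      exact infDist_le_hausdorffDist_of_mem hxA
        (hausdorffEdist_ne_top_of_nonempty_of_bounded hAne hBne hAc.isBounded hBc.isBounded)
    calc infDist y (⋃ x ∈ B, T x) ≤ l * dist x q := h1.trans (h2.trans h3)
      _ ≤ l * hausdorffDist A B := by nlinarith
  apply hausdorffDist_le_of_infDist
  · exact mul_nonneg hl.le hausdorffDist_nonneg
  · exact key P Q hPne hPc hQne hQc
  · intro y hy
    rw [hausdorffDist_comm]
    exact key Q P hQne hQc hPne hPc y hy
end

section
/- Let T : (ℕ → A) → Set (ℕ → A) be a δ-causal multivalued stream transformer with δ ≥ 1 and nonempty compact values. Then there is a unique nonempty compact set F of streams with ⋃_{f ∈ F} T f = F, and for every nonempty compact F_0 and the Picard iteration F_{k+1} = ⋃_{f ∈ F_k} T f, the quantitative bound hausdorffDist F_k F ≤ (1/2)^(k * δ) holds for all k ∈ ℕ. -/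
open Metric

namespace StreamAux

variable {A : Type*}

open Classical in
lemma dist_eq (f g : ℕ → A) :
    dist f g = if f ≠ g then (1/2 : ℝ) ^ (PiNat.firstDiff f g) else 0 := rfl

lemma dist_eq_of_ne {f g : ℕ → A} (h : f ≠ g) :
    dist f g = (1/2 : ℝ) ^ (PiNat.firstDiff f g) := by
  rw [dist_eq, if_pos h]

lemma dist_le_pow {f g : ℕ → A} {n : ℕ} (h : ∀ i < n, f i = g i) :
    dist f g ≤ (1/2 : ℝ) ^ n := by
  rcases eq_or_ne f g with rfl | hne
  · simp only [dist_eq, ne_eq, not_true_eq_false, if_false]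
    positivity
  · rw [dist_eq_of_ne hne]
    apply pow_le_pow_of_le_one (by norm_num) (by norm_num)
    by_contra hlt
    push_neg at hlt
    exact PiNat.apply_firstDiff_ne hne (h _ hlt)

lemma dist_le_one (f g : ℕ → A) : dist f g ≤ 1 := by
  simpa using dist_le_pow (f := f) (g := g) (n := 0) (by omega)

lemma isBounded (s : Set (ℕ → A)) : Bornology.IsBounded s :=
  Metric.isBounded_iff.2 ⟨1, fun _ _ _ _ => dist_le_one _ _⟩

lemma hEdist_ne_top {s t : Set (ℕ → A)} (hs : s.Nonempty) (ht : t.Nonempty) :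
    EMetric.hausdorffEdist s t ≠ ⊤ :=
  Metric.hausdorffEdist_ne_top_of_nonempty_of_bounded hs ht (isBounded s) (isBounded t)

lemma completeSpace : CompleteSpace (ℕ → A) := by
  letI : TopologicalSpace A := ⊥
  haveI : DiscreteTopology A := ⟨rfl⟩
  exact PiNat.completeSpace

section T
variable (T : (ℕ → A) → Set (ℕ → A)) {δ : ℕ}

/-- key Lipschitz estimate -/
lemma hd_T_le (hcausal : IsCausal δ T) (hne : ∀ f, (T f).Nonempty) (f g : ℕ → A) :
    hausdorffDist (T f) (T g) ≤ (1/2 : ℝ) ^ δ * dist f g := by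
  rcases eq_or_ne f g with rfl | hne'
  · rw [hausdorffDist_self_zero]
    positivity
  · set n := PiNat.firstDiff f g with hn
    have hagree : ∀ i < n, f i = g i := fun i hi => PiNat.apply_eq_of_lt_firstDiff hi
    have himg := hcausal n f g hagree
    have key : ∀ (p q : ℕ → A), ((fun (u : ℕ → A) (i : Fin (n + δ)) => u (i : ℕ)) '' T p =
        (fun (u : ℕ → A) (i : Fin (n + δ)) => u (i : ℕ)) '' T q) →
        ∀ u ∈ T p, ∃ v ∈ T q, dist u v ≤ (1/2 : ℝ) ^ (n + δ) := by
      intro p q hpq u hu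
      have : (fun (i : Fin (n + δ)) => u (i : ℕ)) ∈
          (fun (u : ℕ → A) (i : Fin (n + δ)) => u (i : ℕ)) '' T q := by
        rw [← hpq]; exact ⟨u, hu, rfl⟩
      obtain ⟨v, hv, hveq⟩ := this
      refine ⟨v, hv, dist_le_pow fun i hi => ?_⟩
      exact (congrFun hveq ⟨i, hi⟩ : v i = u i).symm
    have h1 := key f g himg
    have h2 := key g f himg.symm
    have := hausdorffDist_le_of_mem_dist (r := (1/2 : ℝ) ^ (n + δ)) (by positivity) h1 h2
    calc hausdorffDist (T f) (T g) ≤ (1/2 : ℝ) ^ (n + δ) := this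
      _ = (1/2 : ℝ) ^ δ * dist f g := by rw [dist_eq_of_ne hne', ← hn, pow_add, mul_comm]

/-- one-sided approximation extraction -/
lemma exists_close (hcomp : ∀ f, IsCompact (T f)) (hne : ∀ f, (T f).Nonempty)
    {f g : ℕ → A} {u : ℕ → A} (hu : u ∈ T f) {r : ℝ} (hr : hausdorffDist (T f) (T g) ≤ r) :
    ∃ v ∈ T g, dist u v ≤ r := by
  obtain ⟨v, hv, hveq⟩ := (hcomp g).exists_infDist_eq_dist (hne g) u
  refine ⟨v, hv, ?_⟩
  rw [← hveq]
  exact le_trans (infDist_le_hausdorffDist_of_mem hu (hEdist_ne_top (hne f) (hne g))) hr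

end T

section SP
variable (T : (ℕ → A) → Set (ℕ → A)) {δ : ℕ}
  (hcausal : IsCausal δ T) (hne : ∀ f, (T f).Nonempty) (hcomp : ∀ f, IsCompact (T f))
include hcausal hne hcomp

lemma SP_compact {P : Set (ℕ → A)} (hP : IsCompact P) :
    IsCompact (⋃ f ∈ P, T f) := by
  haveI : CompleteSpace (ℕ → A) := completeSpace
  rw [isCompact_iff_totallyBounded_isComplete]
  constructor
  · rw [Metric.totallyBounded_iff]
    intro ε hε
    obtain ⟨t, htf, htP⟩ := Metric.totallyBounded_iff.1 hP.totallyBounded (ε/4) (by linarith)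
    obtain ⟨t', ht'f, ht'K⟩ := Metric.totallyBounded_iff.1
      ((htf.isCompact_biUnion (fun c _ => hcomp c)).totallyBounded) (ε/2) (by linarith)
    refine ⟨t', ht'f, ?_⟩
    rintro u hu
    obtain ⟨f, hfP, hu⟩ := Set.mem_iUnion₂.1 hu
    obtain ⟨c, hct, hfc⟩ := Set.mem_iUnion₂.1 (htP hfP)
    have hdc2 : hausdorffDist (T f) (T c) ≤ ε/4 := by
      calc hausdorffDist (T f) (T c) ≤ (1/2:ℝ)^δ * dist f c := hd_T_le T hcausal hne f c
        _ ≤ 1 * dist f c :=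
            mul_le_mul_of_nonneg_right (pow_le_one₀ (by norm_num) (by norm_num)) dist_nonneg
        _ ≤ ε/4 := by rw [one_mul]; exact (mem_ball.1 hfc).le
    obtain ⟨v, hv, huv⟩ := exists_close T hcomp hne hu hdc2
    obtain ⟨y, hyt', hvy⟩ := Set.mem_iUnion₂.1 (ht'K (Set.mem_biUnion hct hv))
    refine Set.mem_biUnion hyt' ?_
    rw [mem_ball] at hvy ⊢
    calc dist u y ≤ dist u v + dist v y := dist_triangle _ _ _
      _ < ε/4 + ε/2 := by
          have := add_lt_add_of_le_of_lt huv ((mem_ball.1 hvy))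
          simpa [dist_comm v y] using this
      _ ≤ ε := by linarith
  · apply IsClosed.isComplete
    apply isClosed_of_closure_subset
    intro u hu
    have hsel : ∀ m : ℕ, ∃ a, a ∈ (⋃ f ∈ P, T f) ∧ dist u a < 1/(m+1) := by
      intro m
      obtain ⟨a, ha, hda⟩ := Metric.mem_closure_iff.1 hu (1/(m+1)) (by positivity)
      exact ⟨a, ha, hda⟩
    choose us hus hdus using hsel
    have hfs : ∀ m, ∃ f, f ∈ P ∧ us m ∈ T f := by
      intro m
      obtain ⟨f, hfP, hf⟩ := Set.mem_iUnion₂.1 (hus m)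
      exact ⟨f, hfP, hf⟩
    choose fs hfsP hfsT using hfs
    obtain ⟨f, hfP, φ, hφ, hconv⟩ := hP.tendsto_subseq hfsP
    have hmem : u ∈ T f := by
      rw [((hcomp f).isClosed).mem_iff_infDist_zero (hne f)]
      refine le_antisymm ?_ infDist_nonneg
      refine le_of_forall_pos_le_add ?_
      intro ε hε
      obtain ⟨N₁, hN₁⟩ := (Metric.tendsto_atTop.1 hconv) (ε/2) (by linarith)
      obtain ⟨N₂, hN₂⟩ := exists_nat_one_div_lt (show (0:ℝ) < ε/2 by linarith)
      set m := max N₁ N₂ with hm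
      have h1 : dist u (us (φ m)) < ε/2 := by
        calc dist u (us (φ m)) < 1/(φ m + 1) := hdus (φ m)
          _ ≤ 1/(N₂ + 1) := by
              apply one_div_le_one_div_of_le (by positivity)
              have : N₂ ≤ φ m := le_trans (le_max_right N₁ N₂) (hφ.le_apply)
              exact_mod_cast by exact_mod_cast Nat.add_le_add_right this 1
          _ < ε/2 := hN₂
      have h2 : dist (fs (φ m)) f < ε/2 := hN₁ m (le_max_left N₁ N₂)
      have h3 : infDist (us (φ m)) (T f) ≤ ε/2 := by
        calc infDist (us (φ m)) (T f)
            ≤ hausdorffDist (T (fs (φ m))) (T f) :=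
              infDist_le_hausdorffDist_of_mem (hfsT (φ m)) (hEdist_ne_top (hne _) (hne _))
          _ ≤ (1/2:ℝ)^δ * dist (fs (φ m)) f := hd_T_le T hcausal hne _ _
          _ ≤ 1 * dist (fs (φ m)) f :=
              mul_le_mul_of_nonneg_right (pow_le_one₀ (by norm_num) (by norm_num)) dist_nonneg
          _ ≤ ε/2 := by rw [one_mul]; exact h2.le
      calc infDist u (T f) ≤ infDist (us (φ m)) (T f) + dist u (us (φ m)) :=
            infDist_le_infDist_add_dist
        _ ≤ ε/2 + ε/2 := add_le_add h3 h1.le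
        _ ≤ 0 + ε := by linarith
    exact Set.mem_biUnion hfP hmem

lemma SP_approx {P Q : Set (ℕ → A)} (hPne : P.Nonempty) (hQne : Q.Nonempty)
    (hQ : IsCompact Q) {u : ℕ → A} (hu : u ∈ ⋃ f ∈ P, T f) :
    ∃ v ∈ ⋃ g ∈ Q, T g, dist u v ≤ (1/2:ℝ)^δ * hausdorffDist P Q := by
  obtain ⟨f, hfP, hu⟩ := Set.mem_iUnion₂.1 hu
  obtain ⟨g, hgQ, hgeq⟩ := hQ.exists_infDist_eq_dist hQne f
  have hfg : dist f g ≤ hausdorffDist P Q := by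
    rw [← hgeq]
    exact infDist_le_hausdorffDist_of_mem hfP (hEdist_ne_top hPne hQne)
  have hd : hausdorffDist (T f) (T g) ≤ (1/2:ℝ)^δ * hausdorffDist P Q :=
    le_trans (hd_T_le T hcausal hne f g)
      (mul_le_mul_of_nonneg_left hfg (pow_nonneg (by norm_num) δ))
  obtain ⟨v, hv, huv⟩ := exists_close T hcomp hne hu hd
  exact ⟨v, Set.mem_biUnion hgQ hv, huv⟩

lemma SP_contract {P Q : Set (ℕ → A)} (hPne : P.Nonempty) (hQne : Q.Nonempty)
    (hP : IsCompact P) (hQ : IsCompact Q) :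
    hausdorffDist (⋃ f ∈ P, T f) (⋃ g ∈ Q, T g) ≤ (1/2:ℝ)^δ * hausdorffDist P Q := by
  refine hausdorffDist_le_of_mem_dist (mul_nonneg (pow_nonneg (by norm_num) δ) hausdorffDist_nonneg) ?_ ?_
  · exact fun u hu => SP_approx T hcausal hne hcomp hPne hQne hQ hu
  · intro v hv
    obtain ⟨w, hw, hvw⟩ := SP_approx T hcausal hne hcomp hQne hPne hP hv
    refine ⟨w, hw, ?_⟩
    calc dist v w ≤ (1/2:ℝ)^δ * hausdorffDist Q P := hvw
      _ = (1/2:ℝ)^δ * hausdorffDist P Q := by rw [hausdorffDist_comm]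

end SP
lemma hd_le_one {s t : Set (ℕ → A)} (hs : s.Nonempty) (ht : t.Nonempty) :
    hausdorffDist s t ≤ 1 :=
  hausdorffDist_le_of_mem_dist zero_le_one
    (fun x _ => ⟨ht.choose, ht.choose_spec, dist_le_one _ _⟩)
    (fun y _ => ⟨hs.choose, hs.choose_spec, dist_le_one _ _⟩)

end StreamAux

open TopologicalSpace Function

/-- For a strongly (δ ≥ 1) causal stream transformer with nonempty compact values there is a
unique nonempty compact fixed set of the strongest post transformer, and the Picard iteration
approximates it with the quantitative bound (1/2)^(k·δ). -/
theorem strongest_post_fixpoint_streams {A : Type*} [Nonempty A]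
    (T : (ℕ → A) → Set (ℕ → A)) (δ : ℕ) (hδ : 1 ≤ δ) (hcausal : IsCausal δ T)
    (hne : ∀ f, (T f).Nonempty) (hcomp : ∀ f, IsCompact (T f)) :
    ∃ F : Set (ℕ → A), (F.Nonempty ∧ IsCompact F ∧ (⋃ f ∈ F, T f) = F) ∧
      (∀ G : Set (ℕ → A), G.Nonempty → IsCompact G → (⋃ f ∈ G, T f) = G → G = F) ∧
      ∀ F₀ : Set (ℕ → A), F₀.Nonempty → IsCompact F₀ →
        ∀ Fs : ℕ → Set (ℕ → A), Fs 0 = F₀ → (∀ k, Fs (k + 1) = ⋃ f ∈ Fs k, T f) →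
          ∀ k : ℕ, hausdorffDist (Fs k) F ≤ (1 / 2 : ℝ) ^ (k * δ) := by
  classical
  haveI : CompleteSpace (ℕ → A) := StreamAux.completeSpace
  haveI hMne : Nonempty (ℕ → A) := ⟨fun _ => Classical.arbitrary A⟩
  haveI : Nonempty (NonemptyCompacts (ℕ → A)) :=
    ⟨⟨⟨{Classical.arbitrary (ℕ → A)}, isCompact_singleton⟩, Set.singleton_nonempty _⟩⟩
  set SP' : NonemptyCompacts (ℕ → A) → NonemptyCompacts (ℕ → A) := fun P =>
    ⟨⟨⋃ f ∈ (P : Set (ℕ → A)), T f, StreamAux.SP_compact T hcausal hne hcomp P.isCompact⟩,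
      ⟨(hne P.nonempty.choose).choose,
        Set.mem_biUnion P.nonempty.choose_spec (hne P.nonempty.choose).choose_spec⟩⟩ with hSP'
  have hSPcoe : ∀ P : NonemptyCompacts (ℕ → A),
      (SP' P : Set (ℕ → A)) = ⋃ f ∈ (P : Set (ℕ → A)), T f := fun P => rfl
  set K : NNReal := (1/2 : NNReal) ^ δ with hK
  have hKcoe : (K : ℝ) = (1/2 : ℝ) ^ δ := by
    rw [hK]; push_cast; norm_num
  have hK1 : K < 1 := by
    calc K ≤ (1/2 : NNReal) ^ 1 := pow_le_pow_of_le_one (by norm_num) (by norm_num) hδ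
      _ < 1 := by
          rw [pow_one]
          exact NNReal.coe_lt_coe.1 (by norm_num)
  have hcontr : ContractingWith K SP' := by
    refine ⟨hK1, LipschitzWith.of_dist_le_mul fun P Q => ?_⟩
    rw [NonemptyCompacts.dist_eq, NonemptyCompacts.dist_eq, hSPcoe, hSPcoe, hKcoe]
    exact StreamAux.SP_contract T hcausal hne hcomp P.nonempty Q.nonempty
      P.isCompact Q.isCompact
  set F' : NonemptyCompacts (ℕ → A) := ContractingWith.fixedPoint SP' hcontr with hF'
  have hfixed : IsFixedPt SP' F' := hcontr.fixedPoint_isFixedPt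
  refine ⟨(F' : Set (ℕ → A)), ⟨F'.nonempty, F'.isCompact, ?_⟩, ?_, ?_⟩
  · rw [← hSPcoe F']
    exact congrArg (fun s : NonemptyCompacts (ℕ → A) => (s : Set (ℕ → A))) hfixed
  · intro G hGne hGc hGfix
    have : IsFixedPt SP' ⟨⟨G, hGc⟩, hGne⟩ := NonemptyCompacts.ext hGfix
    have := hcontr.fixedPoint_unique' this hfixed
    exact congrArg (fun s : NonemptyCompacts (ℕ → A) => (s : Set (ℕ → A))) this
  · intro F₀ hF₀ne hF₀c Fs h0 hstep
    have main : ∀ k : ℕ, (Fs k).Nonempty ∧ IsCompact (Fs k) ∧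
        hausdorffDist (Fs k) (F' : Set (ℕ → A)) ≤ (1/2 : ℝ) ^ (k * δ) := by
      intro k
      induction k with
      | zero =>
        rw [h0]
        exact ⟨hF₀ne, hF₀c, by
          simpa using StreamAux.hd_le_one hF₀ne F'.nonempty⟩
      | succ k ih =>
        obtain ⟨ihne, ihc, ihd⟩ := ih
        rw [hstep k]
        refine ⟨⟨(hne ihne.choose).choose,
          Set.mem_biUnion ihne.choose_spec (hne ihne.choose).choose_spec⟩,
          StreamAux.SP_compact T hcausal hne hcomp ihc, ?_⟩
        have hFfix : (F' : Set (ℕ → A)) = ⋃ f ∈ (F' : Set (ℕ → A)), T f := by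
          rw [← hSPcoe F']
          exact (congrArg (fun s : NonemptyCompacts (ℕ → A) => (s : Set (ℕ → A))) hfixed).symm
        have hstep2 : hausdorffDist (⋃ f ∈ Fs k, T f) (F' : Set (ℕ → A)) ≤
            (1/2 : ℝ) ^ δ * hausdorffDist (Fs k) (F' : Set (ℕ → A)) := by
          conv_lhs => rw [hFfix]
          exact StreamAux.SP_contract T hcausal hne hcomp ihne F'.nonempty ihc F'.isCompact
        calc hausdorffDist (⋃ f ∈ Fs k, T f) (F' : Set (ℕ → A))
            ≤ (1/2 : ℝ) ^ δ * hausdorffDist (Fs k) (F' : Set (ℕ → A)) := hstep2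
          _ ≤ (1/2 : ℝ) ^ δ * (1/2 : ℝ) ^ (k * δ) :=
              mul_le_mul_of_nonneg_left ihd (pow_nonneg (by norm_num) δ)
          _ = (1/2 : ℝ) ^ ((k + 1) * δ) := by rw [← pow_add]; ring_nf
    exact fun k => (main k).2.2
end

section
/- Let M be a complete metric space and let T : M → Set M be l-Lipschitz with nonempty compact values, where 0 < l < 1, and let F be the unique nonempty compact subset of M with ⋃_{x ∈ F} T x = F. Then every fixpoint of T is contained in F: if x ∈ T x then x ∈ F. -/
open Metric

/-- Every fixpoint of a Lipschitz contractive multivalued map with nonempty compact values on a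
complete metric space is contained in the unique nonempty compact fixed set of its strongest
post transformer. -/
theorem fixpoint_mem_strongest_post_fixpoint {M : Type*} [MetricSpace M] [CompleteSpace M]
    (T : M → Set M) (l : ℝ) (hl0 : 0 < l) (hl1 : l < 1)
    (hne : ∀ x, (T x).Nonempty) (hcomp : ∀ x, IsCompact (T x))
    (hT : ∀ x y : M, hausdorffDist (T x) (T y) ≤ l * dist x y)
    (F : Set M) (hFne : F.Nonempty) (hFcomp : IsCompact F) (hFfix : (⋃ x ∈ F, T x) = F) :
    ∀ x : M, x ∈ T x → x ∈ F := by
  intro x hx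
  obtain ⟨y, hyF, hyd⟩ := hFcomp.exists_infDist_eq_dist hFne x
  have hTyF : T y ⊆ F := by
    rw [← hFfix]; exact Set.subset_biUnion_of_mem hyF
  have hfin : EMetric.hausdorffEdist (T x) (T y) ≠ ⊤ :=
    hausdorffEdist_ne_top_of_nonempty_of_bounded (hne x) (hne y)
      (hcomp x).isBounded (hcomp y).isBounded
  have h1 : infDist x F ≤ infDist x (T y) :=
    infDist_le_infDist_of_subset hTyF (hne y)
  have h2 : infDist x (T y) ≤ hausdorffDist (T x) (T y) :=
    infDist_le_hausdorffDist_of_mem hx hfin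
  have h3 : infDist x F ≤ l * infDist x F := by
    calc infDist x F ≤ hausdorffDist (T x) (T y) := h1.trans h2
      _ ≤ l * dist x y := hT x y
      _ = l * infDist x F := by rw [hyd]
  have h0 : 0 ≤ infDist x F := infDist_nonneg
  have : infDist x F = 0 := by nlinarith
  have := (hFcomp.isClosed.mem_iff_infDist_zero hFne).2 this
  exact this
end

section
/- Let T : (ℕ → A) → Set (ℕ → A) be l-Lipschitz with nonempty compact values, where 0 < l < 1, and let F be the unique nonempty compact set of streams with ⋃_{f ∈ F} T f = F. If P is a nonempty closed set of streams such that T f ⊆ P for every f ∈ P, then F ⊆ P. -/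
open Metric

/-- Induction principle for the strongest post fixpoint: if a nonempty closed set P of streams
is invariant under the Lipschitz contractive transformer T, then the unique nonempty compact
fixed set F of the strongest post transformer is contained in P. -/
theorem strongest_post_induction {A : Type*} (T : (ℕ → A) → Set (ℕ → A))
    (l : ℝ) (hl0 : 0 < l) (hl1 : l < 1)
    (hne : ∀ f, (T f).Nonempty) (hcomp : ∀ f, IsCompact (T f))
    (hT : ∀ f g : ℕ → A, hausdorffDist (T f) (T g) ≤ l * dist f g)
    (F : Set (ℕ → A)) (hFne : F.Nonempty) (hFcomp : IsCompact F)
    (hFfix : (⋃ f ∈ F, T f) = F)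
    (P : Set (ℕ → A)) (hPne : P.Nonempty) (hPclosed : IsClosed P)
    (hPinv : ∀ f ∈ P, T f ⊆ P) :
    F ⊆ P := by
  -- Key step: for x ∈ T f, infDist x P ≤ l * infDist f P
  have key : ∀ f, ∀ x ∈ T f, infDist x P ≤ l * infDist f P := by
    intro f x hx
    have hstep : ∀ g ∈ P, infDist x P ≤ l * dist f g := by
      intro g hg
      have hsub : T g ⊆ P := hPinv g hg
      have h1 : infDist x P ≤ infDist x (T g) :=
        infDist_le_infDist_of_subset hsub (hne g)
      have hfin : EMetric.hausdorffEdist (T f) (T g) ≠ ⊤ :=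
        hausdorffEdist_ne_top_of_nonempty_of_bounded (hne f) (hne g)
          (hcomp f).isBounded (hcomp g).isBounded
      have h2 : infDist x (T g) ≤ hausdorffDist (T f) (T g) :=
        infDist_le_hausdorffDist_of_mem hx hfin
      exact h1.trans (h2.trans (hT f g))
    have : infDist x P / l ≤ infDist f P := by
      haveI := Set.Nonempty.to_subtype hPne
      conv_rhs => rw [infDist_eq_iInf]
      refine le_ciInf fun g => ?_
      rw [div_le_iff₀ hl0]
      simpa [mul_comm] using hstep g g.2
    calc infDist x P = l * (infDist x P / l) := by field_simp
      _ ≤ l * infDist f P := by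
          exact mul_le_mul_of_nonneg_left this hl0.le
  -- max of infDist to P over F
  obtain ⟨x0, hx0F, hmax⟩ := hFcomp.exists_isMaxOn hFne
    ((continuous_infDist_pt P).continuousOn)
  have hd0 : infDist x0 P = 0 := by
    obtain ⟨f, hfF, hx0f⟩ : ∃ f ∈ F, x0 ∈ T f := by
      have := hFfix ▸ hx0F
      simpa using (hFfix.symm ▸ hx0F : x0 ∈ ⋃ f ∈ F, T f)
    have h1 : infDist x0 P ≤ l * infDist f P := key f x0 hx0f
    have h2 : infDist f P ≤ infDist x0 P := hmax hfF
    have h3 : infDist x0 P ≤ l * infDist x0 P :=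
      h1.trans (mul_le_mul_of_nonneg_left h2 hl0.le)
    nlinarith [infDist_nonneg (x := x0) (s := P)]
  intro x hxF
  have : infDist x P = 0 :=
    le_antisymm ((hmax hxF).trans hd0.le) infDist_nonneg
  exact hPclosed.mem_iff_infDist_zero hPne |>.mpr this
end

section
/- Let T : (ℕ → A) → Set (ℕ → A) be a multivalued stream transformer such that (1) every value T f is a closed subset of ℕ → A, (2) there exist streams f₀, f₁ with f₁ ∈ T f₀, and (3) T is an l-contraction for some 0 ≤ l < 1, i.e. for all f, g and every u ∈ T f there exists v ∈ T g with dist u v ≤ l * dist f g. Then T has a fixpoint: there exists f* with f* ∈ T f*. -/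
open Metric

/-- A contractive multivalued stream transformer with closed values which is not the constant
map to the empty set has a fixpoint. -/
theorem contractive_transformer_has_fixpoint {A : Type*} (T : (ℕ → A) → Set (ℕ → A))
    (hclosed : ∀ f, IsClosed (T f)) (f₀ f₁ : ℕ → A) (hf₁ : f₁ ∈ T f₀)
    (l : ℝ) (hl0 : 0 ≤ l) (hl1 : l < 1)
    (hcontr : ∀ f g : ℕ → A, ∀ u ∈ T f, ∃ v ∈ T g, dist u v ≤ l * dist f g) :
    ∃ fstar : ℕ → A, fstar ∈ T fstar := by
  haveI : CompleteSpace (ℕ → A) := by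
    letI : TopologicalSpace A := ⊥
    haveI : DiscreteTopology A := ⟨rfl⟩
    exact PiNat.completeSpace
  -- build the iteration sequence
  let F : ℕ → {p : (ℕ → A) × (ℕ → A) // p.2 ∈ T p.1 ∧
      dist p.1 p.2 ≤ l ^ (0 : ℕ) * dist f₀ f₁} → Unit := fun _ _ => ()
  clear F
  have step : ∀ (p : {p : (ℕ → A) × (ℕ → A) // p.2 ∈ T p.1}),
      {q : {q : (ℕ → A) × (ℕ → A) // q.2 ∈ T q.1} //
        q.1.1 = p.1.2 ∧ dist q.1.1 q.1.2 ≤ l * dist p.1.1 p.1.2} := by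
    intro p
    have h := hcontr p.1.1 p.1.2 p.1.2 p.2
    choose v hv hd using h
    exact ⟨⟨(p.1.2, v), hv⟩, rfl, hd⟩
  let seq : ℕ → {p : (ℕ → A) × (ℕ → A) // p.2 ∈ T p.1} := fun n =>
    Nat.rec ⟨(f₀, f₁), hf₁⟩ (fun _ p => (step p).1) n
  set u : ℕ → (ℕ → A) := fun n => (seq n).1.1 with hu
  have hsucc : ∀ n, u (n + 1) = (seq n).1.2 := fun n => (step (seq n)).2.1
  have hmem : ∀ n, u (n + 1) ∈ T (u n) := by
    intro n; rw [hsucc n]; exact (seq n).2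
  have hdist : ∀ n, dist (u n) (u (n + 1)) ≤ l ^ n * dist f₀ f₁ := by
    intro n
    induction n with
    | zero =>
      have : u 1 = f₁ := hsucc 0
      simp [this, show u 0 = f₀ from rfl]
    | succ n ih =>
      have h2 : dist (u (n+1)) (u (n+2)) ≤ l * dist (u n) (u (n+1)) := by
        have e2 : seq (n+1) = (step (seq n)).1 := rfl
        have t := (step (seq n)).2.2
        rw [(step (seq n)).2.1] at t
        rw [hsucc (n+1), hsucc n, e2]
        simp only [hu]
        exact t
      calc dist (u (n+1)) (u (n+2)) ≤ l * dist (u n) (u (n+1)) := h2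
        _ ≤ l * (l ^ n * dist f₀ f₁) := mul_le_mul_of_nonneg_left ih hl0
        _ = l ^ (n+1) * dist f₀ f₁ := by ring
  have hcauchy : CauchySeq u :=
    cauchySeq_of_le_geometric l (dist f₀ f₁) hl1
      (fun n => by simpa [mul_comm] using hdist n)
  obtain ⟨fstar, hlim⟩ := cauchySeq_tendsto_of_complete hcauchy
  refine ⟨fstar, ?_⟩
  -- find points of T fstar close to u (n+1)
  have h := fun n => hcontr (u n) fstar (u (n + 1)) (hmem n)
  choose v hv hvd using h
  have hvlim : Filter.Tendsto v Filter.atTop (nhds fstar) := by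
    rw [tendsto_iff_dist_tendsto_zero]
    have hbound : ∀ n, dist (v n) fstar ≤ l * dist (u n) fstar + dist (u (n+1)) fstar := by
      intro n
      calc dist (v n) fstar ≤ dist (v n) (u (n+1)) + dist (u (n+1)) fstar := dist_triangle _ _ _
        _ ≤ l * dist (u n) fstar + dist (u (n+1)) fstar := by
            have := hvd n
            rw [dist_comm] at this
            linarith
    have h1 : Filter.Tendsto (fun n => dist (u n) fstar) Filter.atTop (nhds 0) :=
      (tendsto_iff_dist_tendsto_zero).1 hlim
    have h2 : Filter.Tendsto (fun n => dist (u (n+1)) fstar) Filter.atTop (nhds 0) :=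
      h1.comp (Filter.tendsto_add_atTop_nat 1)
    have h3 : Filter.Tendsto (fun n => l * dist (u n) fstar + dist (u (n+1)) fstar)
        Filter.atTop (nhds 0) := by
      have := (h1.const_mul l).add h2
      simpa using this
    exact squeeze_zero (fun n => dist_nonneg) hbound h3
  exact (hclosed fstar).mem_of_tendsto hvlim (Filter.Eventually.of_forall hv)
end

section
/- Every strongly causal multivalued stream transformer T : (ℕ → A) → Set (ℕ → A) with all values nonempty and compact has a fixpoint: there exists a stream f* with f* ∈ T f*. -/
open Metric

lemma causal_extract {A : Type*} {δ : ℕ} {T : (ℕ → A) → Set (ℕ → A)}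
    (hc : IsCausal δ T) {f g : ℕ → A} {k : ℕ} (hfg : ∀ i < k, f i = g i)
    {x : ℕ → A} (hx : x ∈ T f) : ∃ y ∈ T g, ∀ i < k + δ, y i = x i := by
  have h := hc k f g hfg
  have hmem : (fun (i : Fin (k + δ)) => x (i : ℕ)) ∈
      (fun (u : ℕ → A) (i : Fin (k + δ)) => u (i : ℕ)) '' T g := by
    rw [← h]; exact Set.mem_image_of_mem _ hx
  obtain ⟨y, hy, hyx⟩ := hmem
  exact ⟨y, hy, fun i hi => congrFun hyx ⟨i, hi⟩⟩

/-- Every strongly causal multivalued stream transformer with nonempty compact values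
has a fixpoint. -/
theorem strongly_causal_has_fixpoint {A : Type*} [Nonempty A]
    (T : (ℕ → A) → Set (ℕ → A)) (hne : ∀ f, (T f).Nonempty)
    (hcomp : ∀ f, IsCompact (T f)) (δ : ℕ) (hδ : 1 ≤ δ) (hcausal : IsCausal δ T) :
    ∃ fstar : ℕ → A, fstar ∈ T fstar := by
  classical
  -- build the approximating chain
  obtain ⟨h, hmem, hagree⟩ : ∃ h : ℕ → (ℕ → A),
      (∀ n, h (n+1) ∈ T (h n)) ∧ ∀ n, ∀ i < n*δ, h (n+1) i = h n i := by
    let f0 : ℕ → A := Classical.arbitrary _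
    let S : ℕ → Type _ := fun n =>
      {p : (ℕ → A) × (ℕ → A) // p.2 ∈ T p.1 ∧ ∀ i < n*δ, p.2 i = p.1 i}
    let step : ∀ n, S n → S (n+1) := fun n p =>
      let H := causal_extract hcausal (fun i hi => (p.2.2 i hi).symm) p.2.1
      ⟨(p.1.2, H.choose), H.choose_spec.1, fun i hi =>
        H.choose_spec.2 i (by rw [Nat.succ_mul] at hi; exact hi)⟩
    let chain : ∀ n, S n := fun n =>
      Nat.rec (⟨(f0, (hne f0).choose), (hne f0).choose_spec, by simp⟩ : S 0) step n
    refine ⟨fun n => (chain n).1.1, fun n => ?_, fun n => ?_⟩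
    · show (chain (n+1)).1.1 ∈ T (chain n).1.1
      exact (chain n).2.1
    · show ∀ i < n*δ, (chain (n+1)).1.1 i = (chain n).1.1 i
      exact (chain n).2.2
  -- stability of coordinates
  have hconst : ∀ n m, n ≤ m → ∀ i < n*δ, h m i = h n i := by
    intro n m hnm
    induction m, hnm using Nat.le_induction with
    | base => intro i _; rfl
    | succ m hm ih =>
      intro i hi
      have : i < m * δ := lt_of_lt_of_le hi (Nat.mul_le_mul_right δ hm)
      rw [hagree m i this, ih i hi]
  set fstar : ℕ → A := fun i => h (i+1) i with hfstar_def
  have hfs : ∀ n, ∀ i < n*δ, fstar i = h n i := by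
    intro n i hi
    have h1 : i < (i+1)*δ := lt_of_lt_of_le (Nat.lt_succ_self i)
      (Nat.le_mul_of_pos_right _ hδ)
    have e1 : h (max n (i+1)) i = h (i+1) i := hconst (i+1) _ (le_max_right _ _) i h1
    have e2 : h (max n (i+1)) i = h n i := hconst n _ (le_max_left _ _) i hi
    show h (i+1) i = h n i
    rw [← e1, e2]
  -- approximants in T fstar
  have key : ∀ n : ℕ, ∃ y ∈ T fstar, dist fstar y ≤ (1/2 : ℝ)^n := by
    intro n
    have hag : ∀ i < (n+1)*δ, h (n+1) i = fstar i :=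
      fun i hi => (hfs (n+1) i hi).symm
    obtain ⟨y, hy, hyx⟩ := causal_extract hcausal hag (hmem (n+1))
    refine ⟨y, hy, ?_⟩
    have hd : dist fstar y ≤ (1/2 : ℝ)^((n+1)*δ + δ) := by
      apply PiNat.mem_cylinder_iff_dist_le.mp
      intro i hi
      rw [hyx i hi]
      have e : (n+1)*δ + δ = (n+1+1)*δ := by ring
      exact hfs (n+1+1) i (e ▸ hi)
    refine hd.trans (pow_le_pow_of_le_one (by norm_num) (by norm_num) ?_)
    have : n + 1 ≤ (n+1)*δ := Nat.le_mul_of_pos_right _ hδ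
    omega
  -- fstar is in the closure of T fstar, which is closed
  refine ⟨fstar, ?_⟩
  have hclosed : IsClosed (T fstar) := (hcomp fstar).isClosed
  rw [← hclosed.closure_eq]
  rw [Metric.mem_closure_iff]
  intro ε hε
  obtain ⟨n, hn⟩ := exists_pow_lt_of_lt_one hε (by norm_num : (1/2 : ℝ) < 1)
  obtain ⟨y, hy, hd⟩ := key n
  exact ⟨y, hy, lt_of_le_of_lt hd hn⟩
end

section
/- Every shrinking deterministic stream transformer has a unique fixed point: if T : (ℕ → A) → (ℕ → A) satisfies dist (T f) (T g) < dist f g for all streams f ≠ g, then there exists a unique f* with T f* = f*. -/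
open Metric

/-- Every shrinking deterministic stream transformer has a unique fixed point
(using spherical completeness of the stream space). -/
theorem shrinking_unique_fixpoint {A : Type*} [Nonempty A] (T : (ℕ → A) → (ℕ → A))
    (hshrink : ∀ f g : ℕ → A, f ≠ g → dist (T f) (T g) < dist f g) :
    ∃! fstar : ℕ → A, T fstar = fstar := by
  letI : TopologicalSpace A := ⊥
  haveI : DiscreteTopology A := ⟨rfl⟩
  haveI : CompleteSpace (ℕ → A) := PiNat.completeSpace
  have hlip : LipschitzWith (1/2) T := by
    apply LipschitzWith.of_dist_le_mul
    intro f g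
    rcases eq_or_ne f g with rfl | hne
    · simp
    rcases eq_or_ne (T f) (T g) with h | h
    · rw [h, dist_self]
      positivity
    · have h1 := hshrink f g hne
      rw [PiNat.dist_eq_of_ne hne] at h1 ⊢
      rw [PiNat.dist_eq_of_ne h] at h1 ⊢
      have hm : PiNat.firstDiff f g < PiNat.firstDiff (T f) (T g) := by
        by_contra hc
        push_neg at hc
        exact absurd (pow_le_pow_of_le_one (by norm_num) (by norm_num) hc) (not_le.2 h1)
      calc ((1:ℝ)/2) ^ PiNat.firstDiff (T f) (T g)
          ≤ (1/2) ^ (PiNat.firstDiff f g + 1) :=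
            pow_le_pow_of_le_one (by norm_num) (by norm_num) hm
        _ = ↑(1/2 : NNReal) * (1/2) ^ PiNat.firstDiff f g := by
            rw [pow_succ]; push_cast; ring
  have hC : ContractingWith (1/2) T := ⟨by rw [← NNReal.coe_lt_coe]; norm_num, hlip⟩
  refine ⟨ContractingWith.fixedPoint T hC, hC.fixedPoint_isFixedPt, fun g hg => ?_⟩
  by_contra hne
  exact absurd (hshrink g _ (fun h => hne h)) (by rw [hg, (hC.fixedPoint_isFixedPt : T _ = _)]; simp)
end
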